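/- Noetherianness of adic completions along finitely generated ideals. Let B be a commutative ring and I ⊆ B a finitely generated ideal such that the quotient ring B/I is noetherian. Then the I-adic completion B̂ := lim_n B/I^n is a noetherian ring. -/

import Mathlib

open AdicCompletion MvPolynomial

suppress_compilation




namespace Statement16

variable {B : Type*} [CommRing B] (I : Ideal B)

/-- The filtration on the adic completion: `F I n` is the kernel of evaluation at level `n`. -/
def F (n : ℕ) : Ideal (AdicCompletion I B) where
  carrier := { a | a.val n = 0 }
  add_mem' := by
    intro a b ha hb
    show (a + b).val n = 0
    rw [val_add_apply, ha, hb, add_zero]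
  zero_mem' := rfl
  smul_mem' := by
    intro c a ha
    show (c • a).val n = 0
    have : c • a = c * a := rfl
    rw [this, val_mul, show a.val n = 0 from ha, mul_zero]

variable {I}

lemma mem_F {a : AdicCompletion I B} {n : ℕ} : a ∈ F I n ↔ a.val n = 0 := Iff.rfl

lemma F_mono {m n : ℕ} (h : m ≤ n) : F I n ≤ F I m := by
  intro a ha
  rw [mem_F] at ha ⊢
  rw [← a.property h, ha, _root_.map_zero]

lemma F_zero : F I 0 = ⊤ := by
  refine eq_top_iff.mpr fun a _ => ?_
  rw [mem_F]
  have : Subsingleton (B ⧸ (I ^ 0 • ⊤ : Submodule B B)) := by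
    rw [Submodule.Quotient.subsingleton_iff]
    simp [Ideal.one_eq_top]
  exact Subsingleton.elim _ _

lemma haus {a : AdicCompletion I B} (h : ∀ n, a ∈ F I n) : a = 0 :=
  AdicCompletion.ext fun n => h n

lemma algebraMap_val (b : B) (n : ℕ) :
    (algebraMap B (AdicCompletion I B) b).val n =
      Submodule.Quotient.mk (p := (I ^ n • ⊤ : Submodule B B)) b := rfl

lemma algebraMap_mem_F {b : B} {n : ℕ} (hb : b ∈ I ^ n) :
    algebraMap B (AdicCompletion I B) b ∈ F I n := by
  rw [mem_F, algebraMap_val, Submodule.Quotient.mk_eq_zero]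
  simpa using hb

/-- Elements of `F I m` have all their components represented by elements of `I ^ m`. -/
lemma exists_rep {a : AdicCompletion I B} {m : ℕ} (ha : a ∈ F I m) (n : ℕ) :
    ∃ b ∈ I ^ m, a.val n = Submodule.Quotient.mk (p := (I ^ n • ⊤ : Submodule B B)) b := by
  rcases le_total n m with h | h
  · exact ⟨0, Ideal.zero_mem _, by
      rw [← a.property h, mem_F.mp ha, _root_.map_zero, Submodule.Quotient.mk_zero]⟩
  · obtain ⟨b, hb⟩ := Submodule.Quotient.mk_surjective _ (a.val n)
    refine ⟨b, ?_, hb.symm⟩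
    have := a.property h
    rw [← hb] at this
    change Submodule.Quotient.mk (p := (I ^ m • ⊤ : Submodule B B)) b = a.val m at this
    rw [mem_F.mp ha] at this
    rw [Submodule.Quotient.mk_eq_zero] at this
    simpa using this

/-- Approximation: an element of `F I m` is congruent mod `F I k` to the image of
an element of `I ^ m`. -/
lemma exists_approx {a : AdicCompletion I B} {m : ℕ} (ha : a ∈ F I m) (k : ℕ) :
    ∃ b ∈ I ^ m, a - algebraMap B (AdicCompletion I B) b ∈ F I k := by
  obtain ⟨b, hb, hval⟩ := exists_rep ha k
  refine ⟨b, hb, ?_⟩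
  rw [mem_F, val_sub_apply, hval, algebraMap_val, sub_self]

lemma mul_mem_F {a b : AdicCompletion I B} {m k : ℕ} (ha : a ∈ F I m) (hb : b ∈ F I k) :
    a * b ∈ F I (m + k) := by
  obtain ⟨f, hf, haf⟩ := exists_approx ha (m + k)
  obtain ⟨g, hg, hbg⟩ := exists_approx hb (m + k)
  have h1 : a * b - algebraMap B (AdicCompletion I B) f * algebraMap B (AdicCompletion I B) g
      = a * (b - algebraMap B (AdicCompletion I B) g)
        + (a - algebraMap B (AdicCompletion I B) f) * algebraMap B (AdicCompletion I B) g := by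
    ring
  have h2 : algebraMap B (AdicCompletion I B) f * algebraMap B (AdicCompletion I B) g
      ∈ F I (m + k) := by
    rw [← map_mul]
    exact algebraMap_mem_F (by rw [pow_add]; exact Ideal.mul_mem_mul hf hg)
  have h3 : a * b - algebraMap B (AdicCompletion I B) f * algebraMap B (AdicCompletion I B) g
      ∈ F I (m + k) := by
    rw [h1]
    exact Ideal.add_mem _ (Ideal.mul_mem_left _ _ hbg) (Ideal.mul_mem_right _ _ haf)
  simpa using Ideal.add_mem _ h3 h2

/-- Completeness of the filtration `F`. -/
lemma precomplete (a : ℕ → AdicCompletion I B) (ha : ∀ n, a (n + 1) - a n ∈ F I n) :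
    ∃ L, ∀ n, L - a n ∈ F I n := by
  have key : ∀ m n, m ≤ n → a n - a m ∈ F I m := by
    intro m n h
    induction n, h using Nat.le_induction with
    | base => simp
    | succ n hmn ih =>
      have : a (n + 1) - a m = (a (n + 1) - a n) + (a n - a m) := by ring
      rw [this]
      exact Ideal.add_mem _ (F_mono hmn (ha n)) ih
  refine ⟨⟨fun n => (a n).val n, ?_⟩, ?_⟩
  · intro m n hmn
    have : (a n).val m = (a m).val m := by
      have h := key m n hmn
      rw [mem_F, val_sub_apply, sub_eq_zero] at h
      exact h
    rw [(a n).property hmn, this]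
  · intro n
    rw [mem_F]
    exact sub_self ((a n).val n)

end Statement16




namespace Statement16

variable {B : Type*} [CommRing B] {I : Ideal B} {k : ℕ} {x : Fin k → B}

lemma degree_add (u v : Fin k →₀ ℕ) : (u + v).degree = u.degree + v.degree := by
  simp [Finsupp.degree_eq_weight_one, map_add]

/-- Monomials in the generators land in the corresponding power of `I`. -/
lemma monomial_mem (hx : Ideal.span (Set.range x) = I) (d : Fin k →₀ ℕ) :
    (∏ i ∈ d.support, x i ^ d i) ∈ I ^ d.degree := by
  have hxi : ∀ i, x i ∈ I := fun i => hx ▸ Ideal.subset_span ⟨i, rfl⟩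
  rw [Finsupp.degree_apply]
  classical
  induction d.support using Finset.induction with
  | empty => simp [Ideal.one_eq_top]
  | @insert i t hit ih =>
    rw [Finset.prod_insert hit, Finset.sum_insert hit, pow_add]
    exact Ideal.mul_mem_mul (Ideal.pow_mem_pow (hxi i) _) ih

/-- Evaluating a homogeneous polynomial of degree `n` with coefficients in `K`
lands in `K * I ^ n`. -/
lemma eval_mem (hx : Ideal.span (Set.range x) = I) {p : MvPolynomial (Fin k) B} {n : ℕ}
    (hp : p.IsHomogeneous n) (K : Ideal B) (hc : ∀ d, coeff d p ∈ K) :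
    eval x p ∈ K * I ^ n := by
  rw [eval_eq]
  refine Ideal.sum_mem _ fun d hd => ?_
  have hdeg : d.degree = n := by
    have := hp (mem_support_iff.mp hd)
    rw [Finsupp.degree_eq_weight_one]; exact this
  exact Ideal.mul_mem_mul (hc d) (hdeg ▸ monomial_mem hx d)

lemma eval_mem_top (hx : Ideal.span (Set.range x) = I) {p : MvPolynomial (Fin k) B} {n : ℕ}
    (hp : p.IsHomogeneous n) : eval x p ∈ I ^ n := by
  have := eval_mem hx hp ⊤ (fun d => trivial)
  simpa using this

lemma eval_mem_succ (hx : Ideal.span (Set.range x) = I) {p : MvPolynomial (Fin k) B} {n : ℕ}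
    (hp : p.IsHomogeneous n) (hc : ∀ d, coeff d p ∈ I) : eval x p ∈ I ^ (n + 1) := by
  have := eval_mem hx hp I hc
  rwa [← pow_succ'] at this

/-- Every element of `I ^ n` is the evaluation of a homogeneous polynomial of degree `n`. -/
lemma exists_homog (hx : Ideal.span (Set.range x) = I) :
    ∀ n, ∀ b ∈ I ^ n, ∃ p : MvPolynomial (Fin k) B, p.IsHomogeneous n ∧ eval x p = b := by
  intro n
  induction n with
  | zero => exact fun b _ => ⟨C b, isHomogeneous_C _ _, eval_C b⟩
  | succ n ih =>
    intro b hb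
    rw [pow_succ] at hb
    refine Submodule.mul_induction_on hb ?_ ?_
    · intro m hm c hc
      obtain ⟨p, hp, hep⟩ := ih m hm
      rw [← hx, Ideal.span, Submodule.mem_span_range_iff_exists_fun] at hc
      obtain ⟨co, hco⟩ := hc
      refine ⟨p * ∑ i, C (co i) * X i, ?_, ?_⟩
      · have h1 : (∑ i, C (co i) * X i : MvPolynomial (Fin k) B).IsHomogeneous 1 :=
          IsHomogeneous.sum _ _ _ fun i _ => isHomogeneous_C_mul_X _ _
        exact hp.mul h1
      · rw [map_mul, hep]
        congr 1
        rw [map_sum]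
        simpa [smul_eq_mul] using hco
    · rintro p q ⟨p₁, hp₁, rfl⟩ ⟨p₂, hp₂, rfl⟩
      exact ⟨p₁ + p₂, hp₁.add hp₂, map_add _ _ _⟩

end Statement16




namespace Statement16

variable {R : Type*} [CommRing R] {k : ℕ}

lemma degree_add' (u v : Fin k →₀ ℕ) : (u + v).degree = u.degree + v.degree := by
  simp [Finsupp.degree_eq_weight_one, map_add]

lemma isHomog_degree {g : MvPolynomial (Fin k) R} {e : ℕ} (hg : g.IsHomogeneous e)
    {d : Fin k →₀ ℕ} (hd : coeff d g ≠ 0) : d.degree = e := by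
  have := hg hd
  rw [Finsupp.degree_eq_weight_one]; exact this

/-- Homogeneous component of a product with a homogeneous polynomial, dominant case. -/
lemma homogeneousComponent_mul_homog {g h : MvPolynomial (Fin k) R} {e : ℕ}
    (hg : g.IsHomogeneous e) {n : ℕ} (hen : e ≤ n) :
    homogeneousComponent n (h * g) = homogeneousComponent (n - e) h * g := by
  classical
  ext d
  rw [coeff_homogeneousComponent, coeff_mul, coeff_mul]
  by_cases hd : d.degree = n
  · rw [if_pos hd]
    refine Finset.sum_congr rfl fun uv huv => ?_
    rw [coeff_homogeneousComponent]
    by_cases hv : coeff uv.2 g = 0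
    · simp [hv]
    · have hdeg2 : uv.2.degree = e := isHomog_degree hg hv
      have hsum : uv.1.degree + uv.2.degree = n := by
        rw [← degree_add', (Finset.HasAntidiagonal.mem_antidiagonal.mp huv)]
        exact hd
      have : uv.1.degree = n - e := by omega
      rw [if_pos this]
  · rw [if_neg hd]
    symm
    refine Finset.sum_eq_zero fun uv huv => ?_
    rw [coeff_homogeneousComponent]
    by_cases hv : coeff uv.2 g = 0
    · simp [hv]
    · have hdeg2 : uv.2.degree = e := isHomog_degree hg hv
      have hsum : uv.1.degree + uv.2.degree = d.degree := by
        rw [← degree_add', (Finset.HasAntidiagonal.mem_antidiagonal.mp huv)]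
      have : uv.1.degree ≠ n - e := by omega
      rw [if_neg this, zero_mul]

/-- Homogeneous component of a product with a homogeneous polynomial, low-degree case. -/
lemma homogeneousComponent_mul_homog_lt {g h : MvPolynomial (Fin k) R} {e : ℕ}
    (hg : g.IsHomogeneous e) {n : ℕ} (hen : n < e) :
    homogeneousComponent n (h * g) = 0 := by
  classical
  ext d
  rw [coeff_homogeneousComponent, coeff_zero]
  by_cases hd : d.degree = n
  · rw [if_pos hd, coeff_mul]
    refine Finset.sum_eq_zero fun uv huv => ?_
    by_cases hv : coeff uv.2 g = 0
    · simp [hv]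
    · have hdeg2 : uv.2.degree = e := isHomog_degree hg hv
      have hsum : uv.1.degree + uv.2.degree = d.degree := by
        rw [← degree_add', (Finset.HasAntidiagonal.mem_antidiagonal.mp huv)]
      omega
  · rw [if_neg hd]

/-- A homogeneous polynomial over a quotient lifts to a homogeneous polynomial. -/
lemma exists_homog_lift {S : Type*} [CommRing S] (f : R →+* S) (hf : Function.Surjective f)
    {g : MvPolynomial (Fin k) S} {n : ℕ} (hg : g.IsHomogeneous n) :
    ∃ p : MvPolynomial (Fin k) R, p.IsHomogeneous n ∧ map f p = g := by
  classical
  refine ⟨∑ d ∈ g.support, monomial d (Function.surjInv hf (coeff d g)), ?_, ?_⟩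
  · refine IsHomogeneous.sum _ _ _ fun d hd => isHomogeneous_monomial _ ?_
    exact isHomog_degree hg (mem_support_iff.mp hd)
  · rw [map_sum]
    simp_rw [map_monomial, Function.surjInv_eq hf]
    exact (as_sum g).symm

lemma isHomog_map {S : Type*} [CommRing S] (f : R →+* S)
    {p : MvPolynomial (Fin k) R} {n : ℕ} (hp : p.IsHomogeneous n) :
    (map f p).IsHomogeneous n := by
  intro d hd
  rw [coeff_map] at hd
  exact hp fun h => hd (by rw [h, _root_.map_zero])

end Statement16

namespace Statement16

/-- In a noetherian ring, the span of any set is the span of a finite subset. -/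
lemma exists_finset_span {R : Type*} [CommRing R] [IsNoetherianRing R] (s : Set R) :
    ∃ t : Finset R, ↑t ⊆ s ∧ Ideal.span (↑t : Set R) = Ideal.span s := by
  classical
  have hfg : (Ideal.span s).FG := IsNoetherian.noetherian _
  obtain ⟨u, hu⟩ := hfg
  have hmem : ∀ g : {z // z ∈ u}, ∃ t : Finset R, ↑t ⊆ s ∧ (g : R) ∈ Submodule.span R (↑t : Set R) := by
    intro g
    have : (g : R) ∈ Ideal.span s := by
      rw [← hu]
      exact Ideal.subset_span g.2
    exact Submodule.mem_span_finite_of_mem_span this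
  choose tt htt hmemtt using hmem
  have hsub : ↑(Finset.univ.biUnion tt) ⊆ s := by
    intro z hz
    simp only [Finset.coe_biUnion, Set.mem_iUnion] at hz
    obtain ⟨g, -, hg⟩ := hz
    exact htt g hg
  refine ⟨Finset.univ.biUnion tt, hsub, le_antisymm (Ideal.span_mono hsub) ?_⟩
  rw [← hu, Ideal.span_le]
  intro g hg
  refine Submodule.span_mono ?_ (hmemtt ⟨g, hg⟩)
  intro z hz
  exact Finset.mem_coe.mpr (Finset.mem_biUnion.mpr ⟨⟨g, hg⟩, Finset.mem_univ _, hz⟩)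

end Statement16

open Statement16 in
/-- Noetherianness of adic completions along finitely generated ideals:
if `B` is a commutative ring and `I ⊆ B` a finitely generated ideal such that `B/I` is
noetherian, then the `I`-adic completion `B̂ = lim_n B/I^n` is a noetherian ring. -/
theorem statement_16 (B : Type*) [CommRing B] (I : Ideal B) (hfg : I.FG)
    (hquot : IsNoetherianRing (B ⧸ I)) :
    IsNoetherianRing (AdicCompletion I B) := by
  classical
  haveI : IsNoetherianRing (B ⧸ I) := hquot
  obtain ⟨k, x, hx⟩ := Submodule.fg_iff_exists_fin_generating_family.mp hfg
  have hx : Ideal.span (Set.range x) = I := hx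
  set A := AdicCompletion I B with hA
  set mk : B →+* B ⧸ I := Ideal.Quotient.mk I with hmk
  rw [isNoetherianRing_iff_ideal_fg]
  intro J
  -- the set of leading forms of elements of `J`
  set s : Set (MvPolynomial (Fin k) (B ⧸ I)) :=
    { g | ∃ (n : ℕ) (p : MvPolynomial (Fin k) B) (a : A), p.IsHomogeneous n ∧ a ∈ J ∧
        a ∈ F I n ∧ a - algebraMap B A (eval x p) ∈ F I (n + 1) ∧
        MvPolynomial.map mk p = g } with hs
  obtain ⟨t, hts, hspan⟩ := exists_finset_span s
  choose n p a hp haJ haF hap hmapy using fun (y : {z // z ∈ t}) => hts y.2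
  let Y : {z // z ∈ t} → MvPolynomial (Fin k) (B ⧸ I) := fun y => ↑y
  have hyh : ∀ y : {z // z ∈ t}, (Y y).IsHomogeneous (n y) := fun y => by
    have h2 := isHomog_map mk (hp y)
    rwa [hmapy y] at h2
  -- key descent step
  have key : ∀ m : ℕ, ∀ b : A, b ∈ J → b ∈ F I m →
      ∃ c : {z // z ∈ t} → A, (∀ y, c y ∈ F I (m - n y)) ∧
        (b - ∑ y, c y * a y) ∈ J ∧ (b - ∑ y, c y * a y) ∈ F I (m + 1) := by
    intro m b hbJ hbF
    obtain ⟨f, hf, hbf⟩ := exists_approx hbF (m + 1)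
    obtain ⟨p₀, hp₀, hev₀⟩ := exists_homog hx m f hf
    have hg₀s : MvPolynomial.map mk p₀ ∈ s :=
      ⟨m, p₀, b, hp₀, hbJ, hbF, by rwa [hev₀], rfl⟩
    have hg₀span : MvPolynomial.map mk p₀
        ∈ Ideal.span (↑t : Set (MvPolynomial (Fin k) (B ⧸ I))) := by
      rw [hspan]; exact Ideal.subset_span hg₀s
    rw [Ideal.span, Submodule.mem_span_finset] at hg₀span
    obtain ⟨h, -, hh⟩ := hg₀span
    have hg₀hom : (MvPolynomial.map mk p₀).IsHomogeneous m := isHomog_map mk hp₀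
    have hdecomp : MvPolynomial.map mk p₀
        = ∑ y : {z // z ∈ t}, MvPolynomial.homogeneousComponent m (h (Y y) * Y y) := by
      have h1 : MvPolynomial.map mk p₀
          = MvPolynomial.homogeneousComponent m (MvPolynomial.map mk p₀) := by
        rw [MvPolynomial.homogeneousComponent_of_mem
          ((MvPolynomial.mem_homogeneousSubmodule _ _).mpr hg₀hom)]
        simp
      calc MvPolynomial.map mk p₀
          = MvPolynomial.homogeneousComponent m (MvPolynomial.map mk p₀) := h1
        _ = MvPolynomial.homogeneousComponent m (∑ i ∈ t, h i • i) := by rw [hh]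
        _ = MvPolynomial.homogeneousComponent m (∑ y ∈ t.attach, h (Y y) • Y y) := by
            rw [Finset.sum_attach t (fun i => h i • i)]
        _ = ∑ y ∈ t.attach, MvPolynomial.homogeneousComponent m (h (Y y) • Y y) :=
            map_sum _ _ _
        _ = ∑ y : {z // z ∈ t}, MvPolynomial.homogeneousComponent m (h (Y y) * Y y) := by
            rw [← Finset.univ_eq_attach]
            exact Finset.sum_congr rfl fun y _ => by rw [smul_eq_mul]
    -- lift homogeneous cofactors
    have hq : ∀ y : {z // z ∈ t}, ∃ q : MvPolynomial (Fin k) B,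
        q.IsHomogeneous (m - n y) ∧ (q * p y).IsHomogeneous m ∧
        MvPolynomial.map mk q * Y y
          = MvPolynomial.homogeneousComponent m (h (Y y) * Y y) := by
      intro y
      by_cases hny : n y ≤ m
      · obtain ⟨q, hq1, hq2⟩ := exists_homog_lift mk Ideal.Quotient.mk_surjective
          (MvPolynomial.homogeneousComponent_isHomogeneous (m - n y) (h (Y y)))
        refine ⟨q, hq1, ?_, by rw [hq2, homogeneousComponent_mul_homog (hyh y) hny]⟩
        have := hq1.mul (hp y)
        rwa [Nat.sub_add_cancel hny] at this
      · refine ⟨0, MvPolynomial.isHomogeneous_zero _ _ _,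
          by rw [zero_mul]; exact MvPolynomial.isHomogeneous_zero _ _ _, ?_⟩
        rw [_root_.map_zero, zero_mul,
          homogeneousComponent_mul_homog_lt (hyh y) (by omega)]
    choose q hqh hqph hqmul using hq
    set w : MvPolynomial (Fin k) B := p₀ - ∑ y : {z // z ∈ t}, q y * p y with hw
    have hπw : MvPolynomial.map mk w = 0 := by
      rw [hw, map_sub, map_sum, sub_eq_zero, hdecomp]
      refine Finset.sum_congr rfl fun y _ => ?_
      have h3 : (MvPolynomial.map mk) (q y * p y)
          = (MvPolynomial.map mk) (q y) * (MvPolynomial.map mk) (p y) := map_mul _ _ _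
      rw [h3, hmapy y, ← hqmul y]
    have hwcoeff : ∀ d, MvPolynomial.coeff d w ∈ I := by
      intro d
      have h2 := congrArg (MvPolynomial.coeff d) hπw
      rw [MvPolynomial.coeff_map, MvPolynomial.coeff_zero] at h2
      exact Ideal.Quotient.eq_zero_iff_mem.mp h2
    have hwhom : w.IsHomogeneous m :=
      hp₀.sub (MvPolynomial.IsHomogeneous.sum _ _ _ fun y _ => hqph y)
    have hevw : MvPolynomial.eval x w ∈ I ^ (m + 1) := eval_mem_succ hx hwhom hwcoeff
    refine ⟨fun y => algebraMap B A (MvPolynomial.eval x (q y)),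
      fun y => algebraMap_mem_F (eval_mem_top hx (hqh y)), ?_, ?_⟩
    · exact Ideal.sub_mem _ hbJ (Ideal.sum_mem _ fun y _ => Ideal.mul_mem_left _ _ (haJ y))
    · have hwobs : algebraMap B A (MvPolynomial.eval x w) = algebraMap B A (MvPolynomial.eval x p₀)
          - ∑ y : {z // z ∈ t},
              algebraMap B A (MvPolynomial.eval x (q y)) * algebraMap B A (MvPolynomial.eval x (p y)) := by
        rw [hw]
        simp [map_sub, map_sum, map_mul]
      have heq : b - ∑ y : {z // z ∈ t}, algebraMap B A (MvPolynomial.eval x (q y)) * a y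
          = (b - algebraMap B A (MvPolynomial.eval x p₀)) + algebraMap B A (MvPolynomial.eval x w)
            + ∑ y : {z // z ∈ t},
                algebraMap B A (MvPolynomial.eval x (q y))
                  * (algebraMap B A (MvPolynomial.eval x (p y)) - a y) := by
        rw [hwobs]
        simp only [mul_sub]
        rw [Finset.sum_sub_distrib]
        ring
      rw [heq]
      refine Ideal.add_mem _ (Ideal.add_mem _ ?_ ?_) ?_
      · rwa [hev₀]
      · exact algebraMap_mem_F hevw
      · refine Ideal.sum_mem _ fun y _ => ?_
        have h1 : algebraMap B A (MvPolynomial.eval x (p y)) - a y ∈ F I (n y + 1) := by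
          have h2 := neg_mem (hap y)
          simpa using h2
        exact F_mono (by omega) (mul_mem_F (algebraMap_mem_F (eval_mem_top hx (hqh y))) h1)
  -- J is generated by the finitely many elements `a y`
  refine ⟨Finset.univ.image (fun y : {z // z ∈ t} => a y), ?_⟩
  apply le_antisymm
  · rw [Ideal.span_le]
    intro z hz
    simp only [Finset.coe_image, Set.mem_image, Finset.mem_coe, Finset.mem_univ] at hz
    obtain ⟨y, -, rfl⟩ := hz
    exact haJ y
  · intro b hbJ
    -- the recursively defined approximation sequence
    let d : ∀ m : ℕ, {z : A // z ∈ J ∧ z ∈ F I m} := fun m =>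
      Nat.rec (motive := fun m => {z : A // z ∈ J ∧ z ∈ F I m})
        ⟨b, hbJ, by rw [F_zero]; trivial⟩
        (fun m ih => ⟨ih.1 - ∑ y, (key m ih.1 ih.2.1 ih.2.2).choose y * a y,
          (key m ih.1 ih.2.1 ih.2.2).choose_spec.2.1,
          (key m ih.1 ih.2.1 ih.2.2).choose_spec.2.2⟩) m
    let c : ℕ → {z // z ∈ t} → A := fun m => (key m (d m).1 (d m).2.1 (d m).2.2).choose
    have hdsucc : ∀ m, (d (m + 1)).1 = (d m).1 - ∑ y, c m y * a y := fun m => rfl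
    have hcF : ∀ m y, c m y ∈ F I (m - n y) :=
      fun m y => (key m (d m).1 (d m).2.1 (d m).2.2).choose_spec.1 y
    have hdF : ∀ m, (d m).1 ∈ F I m := fun m => (d m).2.2
    let u : ℕ → {z // z ∈ t} → A := fun M y => ∑ m ∈ Finset.range M, c m y
    have hdM : ∀ M, (d M).1 = b - ∑ y, u M y * a y := by
      intro M
      induction M with
      | zero => simp only [u, Finset.range_zero, Finset.sum_empty, zero_mul,
          Finset.sum_const_zero, sub_zero]; rfl
      | succ M ih =>
        rw [hdsucc, ih]
        simp only [u, Finset.sum_range_succ, add_mul, Finset.sum_add_distrib]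
        ring
    have hlim : ∀ y : {z // z ∈ t}, ∃ L, ∀ M, L - u (M + n y) y ∈ F I M := by
      intro y
      apply precomplete (fun M => u (M + n y) y)
      intro M
      have h1 : u (M + 1 + n y) y - u (M + n y) y = c (M + n y) y := by
        simp [u, show M + 1 + n y = (M + n y) + 1 by omega, Finset.sum_range_succ]
      rw [h1]
      have := hcF (M + n y) y
      rwa [Nat.add_sub_cancel] at this
    choose L hL using hlim
    have hfinal : b - ∑ y, L y * a y = 0 := by
      apply haus
      intro K
      set N := Finset.univ.sup (fun y : {z // z ∈ t} => n y) with hN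
      set M := K + N with hM
      have expand : b - ∑ y, L y * a y = (d M).1 + ∑ y, (u M y - L y) * a y := by
        rw [hdM M]
        simp only [sub_mul]
        rw [Finset.sum_sub_distrib]
        ring
      rw [expand]
      refine Ideal.add_mem _ (F_mono (by omega) (hdF M)) (Ideal.sum_mem _ fun y _ => ?_)
      have hny : n y ≤ N := Finset.le_sup (Finset.mem_univ y)
      have h1 : u M y - L y ∈ F I (M - n y) := by
        have h2 := hL y (M - n y)
        rw [show M - n y + n y = M by omega] at h2
        have := neg_mem h2
        simpa using this
      have h2 := mul_mem_F h1 (haF y)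
      exact F_mono (by omega) h2
    rw [sub_eq_zero] at hfinal
    rw [hfinal]
    refine Ideal.sum_mem _ fun y _ => Ideal.mul_mem_left _ _ (Ideal.subset_span ?_)
    exact Finset.mem_coe.mpr (Finset.mem_image.mpr ⟨y, Finset.mem_univ y, rfl⟩)
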